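/- Let $a$ be a real symmetric $d \times d$ matrix and let $\hat a$ be its comparison matrix, defined by $\hat a_{ii} = a_{ii}$ and $\hat a_{ij} = -|a_{ij}|$ for $i \ne j$. Then $\hat a$ is positive definite if and only if there exist positive integers $r_1, \dots, r_d$ such that for every $i$, $\sum_{m \ne i} \frac{r_i}{r_m} |a_{mi}| < a_{ii}$. -/

import Mathlib

open Matrix BigOperators

section Aux


lemma key_amgm (d : ℕ) (B : Matrix (Fin d) (Fin d) ℝ) (hB : ∀ i j, 0 ≤ B i j)
    (hBs : ∀ i j, B i j = B j i) (w : Fin d → ℝ) (hw : ∀ i, 0 < w i) (v : Fin d → ℝ) :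
    ∑ i, ∑ j, B i j * (v i * v j) ≤ ∑ i, (∑ j, B i j * (w i / w j)) * v i ^ 2 := by
  have step1 : ∑ i, ∑ j, B i j * (v i * v j)
      ≤ ∑ i, ∑ j, (B i j * ((w i / w j) * v i ^ 2) + B i j * ((w j / w i) * v j ^ 2)) / 2 := by
    refine Finset.sum_le_sum fun i _ => Finset.sum_le_sum fun j _ => ?_
    have hwi := hw i; have hwj := hw j
    have ht : 0 < w i / w j := div_pos hwi hwj
    set t := w i / w j with htdef
    have hrec : w j / w i = 1 / t := (one_div_div _ _).symm
    have h1 : 2 * t * (v i * v j) ≤ t ^ 2 * v i ^ 2 + v j ^ 2 := by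
      nlinarith [sq_nonneg (t * v i - v j)]
    have h2 : v i * v j ≤ (t * v i ^ 2 + (1 / t) * v j ^ 2) / 2 := by
      have e : (t * v i ^ 2 + (1 / t) * v j ^ 2) / 2 = (t ^ 2 * v i ^ 2 + v j ^ 2) / (2 * t) := by
        field_simp
      rw [e, le_div_iff₀ (by positivity)]
      linarith
    rw [hrec]
    nlinarith [hB i j, mul_le_mul_of_nonneg_left h2 (hB i j)]
  have swap : ∑ i, ∑ j, B i j * ((w j / w i) * v j ^ 2)
      = ∑ i, ∑ j, B i j * ((w i / w j) * v i ^ 2) := by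
    rw [Finset.sum_comm]
    exact Finset.sum_congr rfl fun i _ => Finset.sum_congr rfl fun j _ => by rw [hBs j i]
  calc ∑ i, ∑ j, B i j * (v i * v j)
      ≤ ∑ i, ∑ j, (B i j * ((w i / w j) * v i ^ 2) + B i j * ((w j / w i) * v j ^ 2)) / 2 := step1
    _ = ∑ i, ((∑ j, B i j * ((w i / w j) * v i ^ 2)) + ∑ j, B i j * ((w j / w i) * v j ^ 2)) / 2 := by
        exact Finset.sum_congr rfl fun i _ => by
          rw [← Finset.sum_div, Finset.sum_add_distrib]
    _ = ((∑ i, ∑ j, B i j * ((w i / w j) * v i ^ 2))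
        + ∑ i, ∑ j, B i j * ((w j / w i) * v j ^ 2)) / 2 := by
        rw [← Finset.sum_div, Finset.sum_add_distrib]
    _ = ∑ i, ∑ j, B i j * ((w i / w j) * v i ^ 2) := by rw [swap]; ring
    _ = ∑ i, (∑ j, B i j * (w i / w j)) * v i ^ 2 := by
        refine Finset.sum_congr rfl fun i _ => ?_
        rw [Finset.sum_mul]
        exact Finset.sum_congr rfl fun j _ => by ring


lemma fwd (d : ℕ) (a : Matrix (Fin d) (Fin d) ℝ) (hsymm : a.IsSymm)
    (ahat : Matrix (Fin d) (Fin d) ℝ)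
    (hhat : ∀ i j, ahat i j = if i = j then a i j else -|a i j|)
    (hPD : ahat.PosDef) :
    ∃ r : Fin d → ℕ, (∀ i, 0 < r i) ∧
      ∀ i, ∑ m ∈ Finset.univ.erase i, ((r i : ℝ) / (r m : ℝ)) * |a m i| < a i i := by
  have hsym' : ∀ i j, a i j = a j i := fun i j => hsymm.apply j i
  -- diagonal entries are positive
  have hdiag : ∀ i, 0 < a i i := by
    intro i
    have h := hPD.dotProduct_mulVec_pos (x := Pi.single i 1) (by
      intro h
      have := congrFun h i
      simp at this)
    have e : star (Pi.single i 1) ⬝ᵥ (ahat *ᵥ Pi.single i 1) = ahat i i := by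
      simp [mulVec_single, dotProduct, Pi.single_apply]
    rw [e, hhat, if_pos rfl] at h
    exact h
  -- the vector x = ahat⁻¹ 1
  have hdet : IsUnit ahat.det := hPD.det_pos.ne'.isUnit
  set x : Fin d → ℝ := ahat⁻¹ *ᵥ (fun _ => (1:ℝ)) with hxdef
  have hx : ahat *ᵥ x = fun _ => (1:ℝ) := by
    rw [hxdef, mulVec_mulVec, Matrix.mul_nonsing_inv _ hdet, one_mulVec]
  have hxrow : ∀ i, ∑ j, ahat i j * x j = 1 := by
    intro i
    have := congrFun hx i
    simpa [mulVec, dotProduct] using this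
  -- x is nonneg
  set p : Fin d → ℝ := fun i => max (x i) 0 with hpdef
  set nn : Fin d → ℝ := fun i => max (-x i) 0 with hndef
  have hp0 : ∀ i, 0 ≤ p i := fun i => le_max_right _ _
  have hn0 : ∀ i, 0 ≤ nn i := fun i => le_max_right _ _
  have hpn : ∀ i, x i = p i - nn i := by
    intro i; simp only [hpdef, hndef]
    rcases le_total (x i) 0 with h | h
    · rw [max_eq_right h, max_eq_left (by linarith)]; ring
    · rw [max_eq_left h, max_eq_right (by linarith)]; ring
  have hprod : ∀ i, p i * nn i = 0 := by
    intro i; simp only [hpdef, hndef]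
    rcases le_total (x i) 0 with h | h
    · rw [max_eq_right h]; ring
    · rw [max_eq_right (by linarith : -x i ≤ 0)]; ring
  have hnzero : nn = 0 := by
    by_contra hne
    have hq := hPD.dotProduct_mulVec_pos hne
    simp only [star_trivial] at hq
    -- nn ⬝ᵥ ahat *ᵥ x = ∑ nn i
    have e1 : nn ⬝ᵥ (ahat *ᵥ x) = ∑ i, nn i := by
      rw [hx]; simp [dotProduct]
    have e2 : nn ⬝ᵥ (ahat *ᵥ x) = nn ⬝ᵥ (ahat *ᵥ p) - nn ⬝ᵥ (ahat *ᵥ nn) := by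
      have hxe : x = p - nn := funext fun i => by simpa using hpn i
      rw [hxe, mulVec_sub, dotProduct_sub]
    have e3 : nn ⬝ᵥ (ahat *ᵥ p) ≤ 0 := by
      have : nn ⬝ᵥ (ahat *ᵥ p) = ∑ i, ∑ j, nn i * (ahat i j * p j) := by
        simp [dotProduct, mulVec, Finset.mul_sum]
      rw [this]
      refine Finset.sum_nonpos fun i _ => Finset.sum_nonpos fun j _ => ?_
      by_cases h : i = j
      · subst h
        rw [hhat, if_pos rfl]
        have := hprod i
        nlinarith [hdiag i, hn0 i, hp0 i]
      · rw [hhat, if_neg h]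
        have h1 : -|a i j| ≤ 0 := neg_nonpos.mpr (abs_nonneg _)
        have := mul_nonneg (hn0 i) (hp0 j)
        nlinarith [abs_nonneg (a i j)]
    have e4 : 0 ≤ ∑ i, nn i := Finset.sum_nonneg fun i _ => hn0 i
    -- quadratic form of nn is ≤ 0, contradiction
    have : nn ⬝ᵥ (ahat *ᵥ nn) ≤ 0 := by
      have := e2.symm.trans e1
      linarith
    linarith
  have hxnn : ∀ i, 0 ≤ x i := by
    intro i
    have : nn i = 0 := congrFun hnzero i
    simp only [hndef] at this
    by_contra h
    push_neg at h
    rw [max_eq_left (by linarith)] at this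
    linarith
  -- strict positivity and row identities
  set T : Fin d → ℝ := fun i => ∑ m ∈ Finset.univ.erase i, |a m i| * x m with hTdef
  have hT0 : ∀ i, 0 ≤ T i := fun i =>
    Finset.sum_nonneg fun m _ => mul_nonneg (abs_nonneg _) (hxnn m)
  have hrowT : ∀ i, a i i * x i - T i = 1 := by
    intro i
    have h := hxrow i
    rw [← Finset.add_sum_erase _ _ (Finset.mem_univ i)] at h
    rw [hhat, if_pos rfl] at h
    have hsum : ∑ j ∈ Finset.univ.erase i, ahat i j * x j = -T i := by
      rw [hTdef, ← Finset.sum_neg_distrib]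
      refine Finset.sum_congr rfl fun m hm => ?_
      have hmi : i ≠ m := fun hh => (Finset.mem_erase.mp hm).1 hh.symm
      rw [hhat, if_neg hmi, hsym' i m]
      ring
    rw [hsum] at h
    linarith
  have hxpos : ∀ i, 0 < x i := by
    intro i
    have h := hrowT i
    nlinarith [hT0 i, hdiag i, hxnn i]
  -- choose N
  obtain ⟨N, hN⟩ := exists_nat_gt (1 + ∑ i, |x i * (a i i * x i - 1)|)
  have habs0 : 0 ≤ ∑ i, |x i * (a i i * x i - 1)| :=
    Finset.sum_nonneg fun i _ => abs_nonneg _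
  have hN1 : (1:ℝ) ≤ (N:ℝ) := by linarith
  have hN0 : (0:ℝ) < (N:ℝ) := by linarith
  have hNi : ∀ i, x i * T i < (N:ℝ) := by
    intro i
    have hTi : T i = a i i * x i - 1 := by linarith [hrowT i]
    have h1 : x i * T i ≤ |x i * (a i i * x i - 1)| := by
      rw [hTi]; exact le_abs_self _
    have h2 : |x i * (a i i * x i - 1)| ≤ ∑ j, |x j * (a j j * x j - 1)| :=
      Finset.single_le_sum (f := fun j => |x j * (a j j * x j - 1)|) (fun j _ => abs_nonneg _) (Finset.mem_univ i)
    linarith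
  refine ⟨fun i => ⌈(N:ℝ) / x i⌉₊, fun i => Nat.ceil_pos.mpr (div_pos hN0 (hxpos i)), ?_⟩
  intro i
  have hbound : ∀ m ∈ Finset.univ.erase i,
      ((⌈(N:ℝ) / x i⌉₊ : ℝ) / (⌈(N:ℝ) / x m⌉₊ : ℝ)) * |a m i|
        ≤ (x m / x i + x m / N) * |a m i| := by
    intro m _
    refine mul_le_mul_of_nonneg_right ?_ (abs_nonneg _)
    have hxi := hxpos i; have hxm := hxpos m
    have hnum : (⌈(N:ℝ) / x i⌉₊ : ℝ) ≤ (N:ℝ) / x i + 1 :=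
      (Nat.ceil_lt_add_one (by positivity)).le
    have hden : (N:ℝ) / x m ≤ (⌈(N:ℝ) / x m⌉₊ : ℝ) := Nat.le_ceil _
    have hdenpos : (0:ℝ) < (N:ℝ) / x m := div_pos hN0 hxm
    calc ((⌈(N:ℝ) / x i⌉₊ : ℝ) / (⌈(N:ℝ) / x m⌉₊ : ℝ))
        ≤ ((N:ℝ) / x i + 1) / ((N:ℝ) / x m) :=
          div_le_div₀ (by positivity) hnum hdenpos hden
      _ = x m / x i + x m / N := by field_simp
  calc ∑ m ∈ Finset.univ.erase i, ((⌈(N:ℝ) / x i⌉₊ : ℝ) / (⌈(N:ℝ) / x m⌉₊ : ℝ)) * |a m i|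
      ≤ ∑ m ∈ Finset.univ.erase i, (x m / x i + x m / N) * |a m i| :=
        Finset.sum_le_sum hbound
    _ = (1 / x i + 1 / N) * T i := by
        rw [hTdef, Finset.mul_sum]
        refine Finset.sum_congr rfl fun m _ => ?_
        field_simp
    _ < a i i := by
        have hxi := hxpos i
        have hTi : T i = a i i * x i - 1 := by linarith [hrowT i]
        have h1 : T i / N < 1 / x i := by
          rw [div_lt_div_iff₀ hN0 hxi]
          have := hNi i
          linarith [mul_comm (x i) (T i)]
        have h2 : (1 / x i) * T i = a i i - 1 / x i := by
          rw [hTi]; field_simp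
        have h3 : (1 / x i + 1 / N) * T i = (1 / x i) * T i + T i / N := by ring
        rw [h3, h2]
        linarith

lemma bwd (d : ℕ) (a : Matrix (Fin d) (Fin d) ℝ) (hsymm : a.IsSymm)
    (ahat : Matrix (Fin d) (Fin d) ℝ)
    (hhat : ∀ i j, ahat i j = if i = j then a i j else -|a i j|)
    (r : Fin d → ℕ) (hr : ∀ i, 0 < r i)
    (hdom : ∀ i, ∑ m ∈ Finset.univ.erase i, ((r i : ℝ) / (r m : ℝ)) * |a m i| < a i i) :
    ahat.PosDef := by
  have hsym' : ∀ i j, a i j = a j i := fun i j => hsymm.apply j i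
  set B : Matrix (Fin d) (Fin d) ℝ := fun i j => if i = j then 0 else |a i j| with hBdef
  have hB : ∀ i j, 0 ≤ B i j := by
    intro i j; simp only [hBdef]; split <;> simp [abs_nonneg]
  have hBs : ∀ i j, B i j = B j i := by
    intro i j; simp only [hBdef]
    by_cases h : i = j
    · subst h; simp
    · rw [if_neg h, if_neg (Ne.symm h), hsym' i j]
  set w : Fin d → ℝ := fun i => (r i : ℝ) with hwdef
  have hw : ∀ i, 0 < w i := fun i => by
    show (0:ℝ) < (r i : ℝ); exact_mod_cast hr i
  have hS : ∀ i, ∑ j, B i j * (w i / w j) < a i i := by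
    intro i
    have heq : ∑ j, B i j * (w i / w j)
        = ∑ m ∈ Finset.univ.erase i, ((r i : ℝ) / (r m : ℝ)) * |a m i| := by
      rw [← Finset.add_sum_erase _ _ (Finset.mem_univ i)]
      simp only [hBdef, if_pos rfl, zero_mul, zero_add]
      refine Finset.sum_congr rfl fun m hm => ?_
      have hmi : i ≠ m := fun h => (Finset.mem_erase.mp hm).1 h.symm
      rw [if_neg hmi, hsym' i m, hwdef]
      ring
    rw [heq]; exact hdom i
  rw [posDef_iff_dotProduct_mulVec]
  constructor
  · show ahatᴴ = ahat
    ext i j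
    simp only [Matrix.conjTranspose_apply, star_trivial, hhat]
    by_cases h : i = j
    · subst h; simp
    · rw [if_neg h, if_neg (Ne.symm h), hsym' i j]
  · intro v hv
    have hquad : star v ⬝ᵥ (ahat *ᵥ v)
        = ∑ i, a i i * v i ^ 2 - ∑ i, ∑ j, B i j * (v i * v j) := by
      simp only [star_trivial, dotProduct, mulVec, dotProduct, Finset.mul_sum]
      rw [← Finset.sum_sub_distrib]
      refine Finset.sum_congr rfl fun i _ => ?_
      have hterm : ∀ j, v i * (ahat i j * v j)
          = (if i = j then a i i * v i ^ 2 else 0) - B i j * (v i * v j) := by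
        intro j
        by_cases h : i = j
        · subst h; simp [hhat, hBdef]; ring
        · rw [hhat, if_neg h]; simp only [hBdef, if_neg h]; ring
      simp only [hterm]
      rw [Finset.sum_sub_distrib, Finset.sum_ite_eq]
      simp
    rw [hquad]
    have hkey := key_amgm d B hB hBs w hw v
    have hlow : ∑ i, (a i i - ∑ j, B i j * (w i / w j)) * v i ^ 2
        ≤ ∑ i, a i i * v i ^ 2 - ∑ i, ∑ j, B i j * (v i * v j) := by
      have : ∑ i, (a i i - ∑ j, B i j * (w i / w j)) * v i ^ 2
          = ∑ i, a i i * v i ^ 2 - ∑ i, (∑ j, B i j * (w i / w j)) * v i ^ 2 := by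
        rw [← Finset.sum_sub_distrib]
        exact Finset.sum_congr rfl fun i _ => by ring
      rw [this]
      linarith [hkey]
    refine lt_of_lt_of_le ?_ hlow
    obtain ⟨i, hi⟩ := Function.ne_iff.mp hv
    refine Finset.sum_pos' (fun i _ => mul_nonneg (sub_pos.mpr (hS i)).le (sq_nonneg _)) ⟨i, Finset.mem_univ i, ?_⟩
    exact mul_pos (sub_pos.mpr (hS i)) (sq_pos_iff.mpr hi)

end Aux

/-- For a real symmetric `d × d` matrix `a` with comparison matrix
`â` (`â_ii = a_ii`, `â_ij = -|a_ij|` for `i ≠ j`), `â` is positive definite iff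
there exist positive integers `r₁, …, r_d` with
`∑_{m ≠ i} (rᵢ/r_m)|a_mi| < a_ii` for every `i`. -/
theorem stmt7 (d : ℕ) (a : Matrix (Fin d) (Fin d) ℝ) (hsymm : a.IsSymm)
    (ahat : Matrix (Fin d) (Fin d) ℝ)
    (hhat : ∀ i j, ahat i j = if i = j then a i j else -|a i j|) :
    ahat.PosDef ↔
      ∃ r : Fin d → ℕ, (∀ i, 0 < r i) ∧
        ∀ i, ∑ m ∈ Finset.univ.erase i, ((r i : ℝ) / (r m : ℝ)) * |a m i| < a i i := by
  constructor
  · exact fwd d a hsymm ahat hhat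
  · rintro ⟨r, hr, hdom⟩
    exact bwd d a hsymm ahat hhat r hr hdom
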